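/- Let z̃ ∈ ℂ and let δ, γ ∈ (0,1] satisfy γ ≥ 2|z̃| and √γ/2 ≤ δ ≤ 2√γ. Then for every θ ∈ ℝ one has γ + (2 Im z̃ / (δ(2+δ))) θ + ((γ − Re z̃)/δ²) θ² ≥ 0. -/

import Mathlib

lemma stmt_15_aux (r i γ δ θ : ℝ) (hd : 0 < δ) (hg : 0 < γ)
    (hr : r ≤ γ / 2) (hi : i ^ 2 ≤ γ ^ 2 / 4) :
    0 ≤ γ + (2 * i / (δ * (2 + δ))) * θ + ((γ - r) / δ ^ 2) * θ ^ 2 := by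
  have hD : (0:ℝ) < δ ^ 2 * (2 + δ) ^ 2 := by positivity
  have key : 0 ≤ (γ + (2 * i / (δ * (2 + δ))) * θ + ((γ - r) / δ ^ 2) * θ ^ 2)
      * (δ ^ 2 * (2 + δ) ^ 2) := by
    have hne : δ ≠ 0 := ne_of_gt hd
    have hne2 : (2 + δ) ≠ 0 := by positivity
    have expand : (γ + (2 * i / (δ * (2 + δ))) * θ + ((γ - r) / δ ^ 2) * θ ^ 2)
        * (δ ^ 2 * (2 + δ) ^ 2)
        = γ * δ ^ 2 * (2 + δ) ^ 2 + 2 * i * δ * (2 + δ) * θ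
          + (γ - r) * (2 + δ) ^ 2 * θ ^ 2 := by
      field_simp
    rw [expand]
    have hA : 0 < (γ - r) * (2 + δ) ^ 2 := by
      have h1 : 0 < γ - r := by linarith
      have h2 : (0:ℝ) < (2 + δ) ^ 2 := by positivity
      exact mul_pos h1 h2
    have h4 : (4:ℝ) ≤ (2 + δ) ^ 2 := by nlinarith
    have hkey : i ^ 2 ≤ (γ - r) * γ * (2 + δ) ^ 2 := by
      have hst : γ ^ 2 / 4 ≤ (γ - r) * γ * 4 := by nlinarith
      have hst2 : (γ - r) * γ * 4 ≤ (γ - r) * γ * (2 + δ) ^ 2 :=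
        mul_le_mul_of_nonneg_left h4
          (mul_nonneg (show (0:ℝ) ≤ γ - r by linarith) hg.le)
      linarith
    have hdisc : (2 * i * δ * (2 + δ)) ^ 2
        ≤ 4 * ((γ - r) * (2 + δ) ^ 2) * (γ * δ ^ 2 * (2 + δ) ^ 2) := by
      have hid : 4 * ((γ - r) * (2 + δ) ^ 2) * (γ * δ ^ 2 * (2 + δ) ^ 2)
          - (2 * i * δ * (2 + δ)) ^ 2
          = 4 * (δ ^ 2 * (2 + δ) ^ 2) * ((γ - r) * γ * (2 + δ) ^ 2 - i ^ 2) := by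
        ring
      nlinarith [mul_nonneg (by positivity : (0:ℝ) ≤ 4 * (δ ^ 2 * (2 + δ) ^ 2))
        (show (0:ℝ) ≤ (γ - r) * γ * (2 + δ) ^ 2 - i ^ 2 by linarith)]
    nlinarith [sq_nonneg (2 * ((γ - r) * (2 + δ) ^ 2) * θ + 2 * i * δ * (2 + δ)),
      hA, hdisc]
  exact (mul_nonneg_iff_of_pos_right hD).mp key

/-- Nonnegativity of the quadratic `f̃₁(θ)` from the
construction of analytic discs partly attached to `ℝ⁺`: if `δ, γ ∈ (0,1]`,
`γ ≥ 2|z̃|` and `√γ/2 ≤ δ ≤ 2√γ`, then for all real `θ`,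
`γ + (2 Im z̃ / (δ(2+δ))) θ + ((γ − Re z̃)/δ²) θ² ≥ 0`. -/
theorem stmt_15 (zt : ℂ) (δ γ : ℝ) (hδ : δ ∈ Set.Ioc (0 : ℝ) 1)
    (hγ : γ ∈ Set.Ioc (0 : ℝ) 1)
    (h1 : 2 * ‖zt‖ ≤ γ)
    (h2 : Real.sqrt γ / 2 ≤ δ) (h3 : δ ≤ 2 * Real.sqrt γ) :
    ∀ θ : ℝ, 0 ≤ γ + (2 * zt.im / (δ * (2 + δ))) * θ + ((γ - zt.re) / δ ^ 2) * θ ^ 2 := by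
  intro θ
  have hm0 : 0 ≤ ‖zt‖ := norm_nonneg zt
  have hre : zt.re ≤ ‖zt‖ :=
    (le_abs_self _).trans (Complex.abs_re_le_norm zt)
  have him : |zt.im| ≤ ‖zt‖ := Complex.abs_im_le_norm zt
  have him2 : zt.im ^ 2 ≤ ‖zt‖ ^ 2 := by
    have h := abs_nonneg zt.im
    nlinarith [sq_abs zt.im]
  exact stmt_15_aux zt.re zt.im γ δ θ hδ.1 hγ.1 (by linarith) (by nlinarith)
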